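/- For every regular language L over a finite alphabet Σ and every nonempty word v ∈ Σ+, the set {(w, (i, j)) ∈ Σ* × ℤ² : w ∈ L, 0 ≤ i ≤ j, v occurs in w at position j (i.e., v = w[j..j+|v|−1], so in particular j + |v| ≤ |w|), and v does not occur in w at any position p with i ≤ p < j} is a cost-enriched regular language with two cost registers. (This set records, for each w ∈ L and start index i, the position j of the first occurrence of v in w at or after position i.) -/

import Mathlib

/-- A cost-enriched finite automaton (CEFA) over alphabet `σ` with `k` cost registers:
states `Q`, a transition set `δ` of tuples `(q, a, q', η)` with update vector
`η : Fin k → ℤ`, initial states `I` and final states `F`. -/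
structure CEFA (σ : Type) (k : ℕ) where
  Q : Type
  δ : Set (Q × σ × Q × (Fin k → ℤ))
  I : Set Q
  F : Set Q

namespace CEFA

variable {σ : Type} {k : ℕ}

/-- A CEFA is finite if its state set and its transition set are finite. -/
def IsFinite (A : CEFA σ k) : Prop := Finite A.Q ∧ A.δ.Finite

/-- `Reach A q w n q'` holds if there is a sequence of transitions of `A` from `q` to `q'`
reading the word `w`, whose cost updates sum up to `n`. -/
inductive Reach (A : CEFA σ k) : A.Q → List σ → (Fin k → ℤ) → A.Q → Prop
  | nil (q : A.Q) : Reach A q [] 0 q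
  | cons {q q' q'' : A.Q} {a : σ} {w : List σ} {η n : Fin k → ℤ} :
      (q, a, q', η) ∈ A.δ → Reach A q' w n q'' → Reach A q (a :: w) (η + n) q''

/-- The cost-enriched language of a CEFA: all pairs `(w, n)` admitting an accepting run. -/
def Lang (A : CEFA σ k) : Set (List σ × (Fin k → ℤ)) :=
  {p | ∃ q₀ qf, q₀ ∈ A.I ∧ qf ∈ A.F ∧ Reach A q₀ p.1 p.2 qf}

end CEFA

/-- A cost-enriched regular language (CERL): a set accepted by some (finite) CEFA. -/
def IsCERL {σ : Type} {k : ℕ} (L : Set (List σ × (Fin k → ℤ))) : Prop :=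
  ∃ A : CEFA σ k, A.IsFinite ∧ A.Lang = L

/-- `OccursAt v w p` : the word `v` occurs in `w` at (0-based) position `p`, i.e. the
factor of `w` of length `|v|` starting at index `p` equals `v` (so `p + |v| ≤ |w|`). -/
def OccursAt {σ : Type} (v w : List σ) (p : ℕ) : Prop :=
  p + v.length ≤ w.length ∧ (w.drop p).take v.length = v

namespace IndexOfCERL
variable {σ T : Type}

/-- Phases of the automaton. -/
inductive Ph (σ : Type) : Type where
  | A : Ph σ
  | B : List σ → Ph σ
  | C : List σ → ℕ → Ph σ
  | D : Ph σ

def Valid (v : List σ) : Ph σ → Prop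
  | .A => True
  | .B u => u.length ≤ v.length - 1
  | .C u t => u.length ≤ v.length - 1 ∧ t < v.length
  | .D => True

/-- sliding window update -/
def push (v u : List σ) (a : σ) : List σ :=
  (u ++ [a]).drop ((u ++ [a]).length - (v.length - 1))

lemma length_push (v u : List σ) (a : σ) : (push v u a).length ≤ v.length - 1 := by
  simp [push]; omega

def okRun (v : List σ) : List σ → List σ → Prop
  | _, [] => True
  | u, a :: y => u ++ [a] ≠ v ∧ okRun v (push v u a) y

lemma suffix_short {v y : List σ} (h : y.length ≤ v.length) : v <:+ y ↔ v = y :=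
  ⟨fun hs => hs.eq_of_length (le_antisymm hs.length_le h),
   fun h => h ▸ List.suffix_refl _⟩

lemma suffix_append_right {v x r : List σ} (h : v.length ≤ r.length) :
    v <:+ x ++ r ↔ v <:+ r := by
  constructor
  · intro hs
    rw [List.suffix_iff_eq_drop] at hs
    have h1 : (x ++ r).length - v.length = x.length + (r.length - v.length) := by
      simp; omega
    rw [h1, List.drop_length_add_append] at hs
    rw [hs]
    exact List.drop_suffix _ _
  · exact fun hs => hs.trans (List.suffix_append x r)

lemma suffix_win_append {v x r : List σ} (hr : r ≠ []) :
    v <:+ (x.drop (x.length - (v.length - 1)) ++ r) ↔ v <:+ x ++ r := by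
  rcases le_or_gt (v.length - 1) x.length with h | h
  · have hx : x ++ r = x.take (x.length - (v.length - 1)) ++
        (x.drop (x.length - (v.length - 1)) ++ r) := by
      rw [← List.append_assoc, List.take_append_drop]
    have hrlen : 1 ≤ r.length := List.length_pos_iff.mpr hr
    have hlen : v.length ≤ (x.drop (x.length - (v.length - 1)) ++ r).length := by
      simp; omega
    rw [hx, suffix_append_right hlen]
  · have hz : x.length - (v.length - 1) = 0 := by omega
    simp [hz]

lemma okRun_iff (v : List σ) (hv : v ≠ []) :
    ∀ (y u : List σ), u.length ≤ v.length - 1 →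
    (okRun v u y ↔ ∀ k < y.length, ¬ v <:+ u ++ y.take (k + 1)) := by
  intro y
  induction y with
  | nil => intro u hu; simp [okRun]
  | cons a y ih =>
    intro u hu
    have hvpos : 1 ≤ v.length := List.length_pos_iff.mpr hv
    have hstep : ∀ k, u ++ (a :: y).take (k + 1 + 1) = (u ++ [a]) ++ y.take (k + 1) := by
      intro k; simp
    have h0 : (¬ v <:+ u ++ (a :: y).take 1) ↔ u ++ [a] ≠ v := by
      rw [show (a :: y).take 1 = [a] from rfl]
      rw [suffix_short (by simp; omega)]
      exact ⟨fun h => fun he => h he.symm, fun h => fun he => h he.symm⟩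
    constructor
    · rintro ⟨h1, h2⟩ k hk
      match k with
      | 0 => exact h0.mpr h1
      | k + 1 =>
        have hk' : k < y.length := by simpa using hk
        have := (ih (push v u a) (length_push v u a)).mp h2 k hk'
        rw [hstep k]
        intro hsuf
        apply this
        rw [push, show (u ++ [a]).length = u.length + 1 from by simp]
        rw [show u.length + 1 = (u ++ [a]).length from by simp]
        refine (suffix_win_append ?_).mpr hsuf
        intro hnil
        rw [List.take_eq_nil_iff] at hnil
        rcases hnil with h' | h'
        · exact absurd h' (by omega)
        · subst h'; simp at hk'
    · intro h
      refine ⟨h0.mp (h 0 (by simp)), ?_⟩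
      rw [ih (push v u a) (length_push v u a)]
      intro k hk hsuf
      apply h (k + 1) (by simpa using Nat.succ_lt_succ hk)
      rw [hstep k]
      have hne : y.take (k + 1) ≠ [] := by
        intro hnil
        rw [List.take_eq_nil_iff] at hnil
        rcases hnil with h' | h'
        · exact absurd h' (by omega)
        · subst h'; simp at hk
      rw [push, show (u ++ [a]).length = u.length + 1 from by simp] at hsuf
      rw [show u.length + 1 = (u ++ [a]).length from by simp] at hsuf
      exact (suffix_win_append hne).mp hsuf

lemma occursAt_iff_suffix {v w : List σ} {q : ℕ} (hv : v ≠ [])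
    (h : q + v.length ≤ w.length) :
    OccursAt v w q ↔ v <:+ w.take (q + v.length) := by
  unfold OccursAt
  rw [List.take_add]
  have hlen : ((w.drop q).take v.length).length = v.length := by simp; omega
  rw [suffix_append_right (by rw [hlen]), suffix_short (by rw [hlen])]
  constructor
  · rintro ⟨h1, h2⟩; exact h2.symm
  · intro h1; exact ⟨h, h1.symm⟩

lemma occ_at_middle (v x y w' : List σ) :
    OccursAt v (x ++ y ++ v ++ w') (x.length + y.length) := by
  constructor
  · simp; omega
  · have h1 : x ++ y ++ v ++ w' = (x ++ y) ++ (v ++ w') := by simp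
    rw [h1, List.drop_left' (by simp), List.take_left]

lemma okRun_iff_noocc {v : List σ} (hv : v ≠ []) (x y w' : List σ) :
    okRun v [] (y ++ v.dropLast) ↔
      ∀ q, x.length ≤ q → q < x.length + y.length →
        ¬ OccursAt v (x ++ y ++ v ++ w') q := by
  have hvpos : 1 ≤ v.length := List.length_pos_iff.mpr hv
  set n := v.length with hn
  set z := y ++ v.dropLast with hz
  have hzlen : z.length = y.length + (n - 1) := by
    rw [hz]; simp [← hn]
  have hwdef : x ++ y ++ v ++ w' = x ++ (z ++ ([v.getLast hv] ++ w')) := by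
    rw [hz]
    conv_lhs => rw [← List.dropLast_append_getLast hv]
    simp [List.append_assoc]
  have hwlen : (x ++ y ++ v ++ w').length = x.length + y.length + n + w'.length := by
    simp [← hn]; omega
  have hE : ∀ k, k + 1 ≤ z.length →
      (x ++ y ++ v ++ w').take (x.length + (k + 1)) = x ++ z.take (k + 1) := by
    intro k hk
    rw [hwdef, List.take_length_add_append, List.take_append_of_le_length hk]
  rw [okRun_iff v hv _ [] (by simp)]
  simp only [List.nil_append, ← hz]
  constructor
  · intro H q hq1 hq2 hocc
    have hql : q + n ≤ (x ++ y ++ v ++ w').length := hocc.1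
    have hsuf := (occursAt_iff_suffix hv hql).mp hocc
    set k := q + n - 1 - x.length with hkdef
    have hk1 : q + n = x.length + (k + 1) := by omega
    rw [hk1, hE k (by omega)] at hsuf
    have hkz : k < z.length := by omega
    refine H k hkz ((suffix_append_right ?_).mp hsuf)
    rw [List.length_take]; omega
  · intro H k hk hsuf
    have hkl : (z.take (k + 1)).length = k + 1 := by
      rw [List.length_take]; omega
    have hnk : n ≤ k + 1 := by
      have := hsuf.length_le; rw [hkl] at this; exact this
    set q := x.length + (k + 1) - n with hqdef
    refine H q (by omega) (by omega) ?_
    refine (occursAt_iff_suffix hv (by rw [hwlen]; omega)).mpr ?_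
    have hq : q + n = x.length + (k + 1) := by omega
    rw [hq, hE k (by omega)]
    exact hsuf.trans (List.suffix_append _ _)

lemma decomp {v w : List σ} {i j : ℕ} (hij : i ≤ j) (hj : j + v.length ≤ w.length)
    (hocc : (w.drop j).take v.length = v) :
    w = w.take i ++ (w.drop i).take (j - i) ++ v ++ w.drop (j + v.length) ∧
      (w.take i).length = i ∧ ((w.drop i).take (j - i)).length = j - i := by
  refine ⟨?_, by simp; omega, by simp; omega⟩
  have h2 : w.drop j = v ++ w.drop (j + v.length) := by
    conv_lhs => rw [← List.take_append_drop v.length (w.drop j)]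
    rw [hocc, List.drop_drop]
  have h1 : w.drop i = (w.drop i).take (j - i) ++ (v ++ w.drop (j + v.length)) := by
    conv_lhs => rw [← List.take_append_drop (j - i) (w.drop i)]
    rw [List.drop_drop, show i + (j - i) = j from by omega, h2]
  conv_lhs => rw [← List.take_append_drop i w, h1]
  simp [List.append_assoc]
/-! ### The automaton -/

inductive Tr (v : List σ) (M : DFA σ T) : T × Ph σ → σ → T × Ph σ → (Fin 2 → ℤ) → Prop where
  | AA (s a) : Tr v M (s, .A) a (M.step s a, .A) ![1, 1]
  | AB (s a) : Tr v M (s, .A) a (M.step s a, .B []) ![1, 1]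
  | AC (s a) : Tr v M (s, .A) a (M.step s a, .C [] 0) ![1, 1]
  | BB (s a u) (h : u ++ [a] ≠ v) :
      Tr v M (s, .B u) a (M.step s a, .B (push v u a)) ![0, 1]
  | BC (s a u) (h : u ++ [a] ≠ v) :
      Tr v M (s, .B u) a (M.step s a, .C (push v u a) 0) ![0, 1]
  | CC (s a u t) (ha : v[t]? = some a) (ht : t + 1 < v.length) (h : u ++ [a] ≠ v) :
      Tr v M (s, .C u t) a (M.step s a, .C (push v u a) (t + 1)) 0
  | CD (s a u t) (ha : v[t]? = some a) (ht : t + 1 = v.length) :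
      Tr v M (s, .C u t) a (M.step s a, .D) 0
  | DD (s a) : Tr v M (s, .D) a (M.step s a, .D) 0

variable (v : List σ) (M : DFA σ T)

def aut : CEFA σ 2 where
  Q := T × {p : Ph σ // Valid v p}
  δ := {x | Tr v M (x.1.1, x.1.2.1) x.2.1 (x.2.2.1.1, x.2.2.1.2.1) x.2.2.2}
  I := {q | q.1 = M.start ∧ (q.2.1 = Ph.A ∨ q.2.1 = Ph.B [] ∨ q.2.1 = Ph.C [] 0)}
  F := {q | q.1 ∈ M.accept ∧ q.2.1 = Ph.D}

lemma mem_delta {s s' : T} {p p' : Ph σ} {hp : Valid v p} {hp' : Valid v p'} {a : σ}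
    {η : Fin 2 → ℤ} (h : Tr v M (s, p) a (s', p') η) :
    (((s, ⟨p, hp⟩) : (aut v M).Q), a, ((s', ⟨p', hp'⟩) : (aut v M).Q), η) ∈ (aut v M).δ := h

/-! ### Properties extracted from accepting runs -/

def PD (s : T) (w : List σ) (c : Fin 2 → ℤ) : Prop :=
  M.evalFrom s w ∈ M.accept ∧ c = 0

def PC (s : T) (u : List σ) (t : ℕ) (w : List σ) (c : Fin 2 → ℤ) : Prop :=
  ∃ w', w = v.drop t ++ w' ∧ c = 0 ∧ okRun v u ((v.drop t).dropLast) ∧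
    M.evalFrom s w ∈ M.accept

def PB (s : T) (u : List σ) (w : List σ) (c : Fin 2 → ℤ) : Prop :=
  ∃ y w', y ≠ [] ∧ w = y ++ v ++ w' ∧ c = ![0, (y.length : ℤ)] ∧
    okRun v u (y ++ v.dropLast) ∧ M.evalFrom s w ∈ M.accept

def PA (s : T) (w : List σ) (c : Fin 2 → ℤ) : Prop :=
  ∃ x y w', x ≠ [] ∧ w = x ++ y ++ v ++ w' ∧
    c = ![(x.length : ℤ), (x.length : ℤ) + (y.length : ℤ)] ∧
    okRun v [] (y ++ v.dropLast) ∧ M.evalFrom s w ∈ M.accept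

lemma sound {q : (aut v M).Q} {w : List σ} {c : Fin 2 → ℤ} {qf : (aut v M).Q}
    (h : CEFA.Reach (aut v M) q w c qf) (hf : qf ∈ (aut v M).F) :
    (q.2.1 = Ph.A → PA v M q.1 w c) ∧
    (∀ u, q.2.1 = Ph.B u → PB v M q.1 u w c) ∧
    (∀ u t, q.2.1 = Ph.C u t → PC v M q.1 u t w c) ∧
    (q.2.1 = Ph.D → PD M q.1 w c) := by
  induction h with
  | nil q =>
    obtain ⟨h1, h2⟩ := hf
    refine ⟨fun hA => ?_, fun u hu => ?_, fun u t hu => ?_, fun _ => ⟨by simpa using h1, rfl⟩⟩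
    · rw [hA] at h2; simp at h2
    · rw [hu] at h2; simp at h2
    · rw [hu] at h2; simp at h2
  | @cons q q' q'' a w η n hδ hr ih =>
    obtain ⟨s, p, hp⟩ := q
    obtain ⟨s', p', hp'⟩ := q'
    have hTr : Tr v M (s, p) a (s', p') η := hδ
    clear hδ
    cases hTr with
    | AA _ _ =>
      obtain ⟨x, y, w', hx, hw, hc, hok, hev⟩ := (ih hf).1 rfl
      refine ⟨fun _ => ⟨a :: x, y, w', by simp, by rw [hw]; simp, ?_, hok, hev⟩,
        fun u hu => by simp at hu, fun u t hu => by simp at hu, fun hu => by simp at hu⟩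
      rw [hc]; funext i; fin_cases i <;> simp <;> push_cast <;> ring
    | AB _ _ =>
      obtain ⟨y, w', hy, hw, hc, hok, hev⟩ := (ih hf).2.1 [] rfl
      refine ⟨fun _ => ⟨[a], y, w', by simp, by rw [hw]; simp, ?_, hok, hev⟩,
        fun u hu => by simp at hu, fun u t hu => by simp at hu, fun hu => by simp at hu⟩
      rw [hc]; funext i; fin_cases i <;> simp <;> push_cast <;> ring
    | AC _ _ =>
      obtain ⟨w', hw, hc, hok, hev⟩ := (ih hf).2.2.1 [] 0 rfl
      refine ⟨fun _ => ⟨[a], [], w', by simp, by rw [hw]; simp, ?_, by simpa using hok, hev⟩,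
        fun u hu => by simp at hu, fun u t hu => by simp at hu, fun hu => by simp at hu⟩
      rw [hc]; funext i; fin_cases i <;> simp
    | BB _ _ u h =>
      obtain ⟨y, w', hy, hw, hc, hok, hev⟩ := (ih hf).2.1 _ rfl
      refine ⟨fun hu => by simp at hu, fun u0 hu => ?_,
        fun u t hu => by simp at hu, fun hu => by simp at hu⟩
      injection hu with hu; subst hu
      refine ⟨a :: y, w', by simp, by rw [hw]; simp, ?_, ⟨h, hok⟩, hev⟩
      rw [hc]; funext i; fin_cases i <;> simp <;> push_cast <;> ring
    | BC _ _ u h =>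
      obtain ⟨w', hw, hc, hok, hev⟩ := (ih hf).2.2.1 _ 0 rfl
      refine ⟨fun hu => by simp at hu, fun u0 hu => ?_,
        fun u t hu => by simp at hu, fun hu => by simp at hu⟩
      injection hu with hu; subst hu
      refine ⟨[a], w', by simp, by rw [hw]; simp, ?_, ⟨h, by simpa using hok⟩, hev⟩
      rw [hc]; funext i; fin_cases i <;> simp
    | CC _ _ u t ha ht h =>
      obtain ⟨w', hw, hc, hok, hev⟩ := (ih hf).2.2.1 _ (t + 1) rfl
      refine ⟨fun hu => by simp at hu, fun u0 hu => by simp at hu,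
        fun u0 t0 hu => ?_, fun hu => by simp at hu⟩
      injection hu with hu1 hu2; subst hu1; subst hu2
      have htlen : t < v.length := by omega
      have hvt : v[t] = a := by
        rw [List.getElem?_eq_getElem htlen] at ha; exact Option.some_injective _ ha
      have hdrop : v.drop t = a :: v.drop (t + 1) := by
        rw [List.drop_eq_getElem_cons htlen, hvt]
      have hne : v.drop (t + 1) ≠ [] := by
        apply List.ne_nil_of_length_pos; rw [List.length_drop]; omega
      refine ⟨w', by rw [hdrop, hw]; simp, by rw [hc]; simp, ?_, hev⟩
      rw [hdrop, List.dropLast_cons_of_ne_nil hne]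
      exact ⟨h, hok⟩
    | CD _ _ u t ha ht =>
      obtain ⟨hev, hc⟩ := (ih hf).2.2.2 rfl
      refine ⟨fun hu => by simp at hu, fun u0 hu => by simp at hu,
        fun u0 t0 hu => ?_, fun hu => by simp at hu⟩
      injection hu with hu1 hu2; subst hu1; subst hu2
      have htlen : t < v.length := by omega
      have hvt : v[t] = a := by
        rw [List.getElem?_eq_getElem htlen] at ha; exact Option.some_injective _ ha
      have hdrop : v.drop t = [a] := by
        rw [List.drop_eq_getElem_cons htlen, hvt, List.drop_of_length_le (by omega)]
      refine ⟨w, by rw [hdrop]; simp, by rw [hc]; simp, ?_, hev⟩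
      rw [hdrop]
      simp [okRun]
    | DD _ _ =>
      obtain ⟨hev, hc⟩ := (ih hf).2.2.2 rfl
      exact ⟨fun hu => by simp at hu, fun u0 hu => by simp at hu,
        fun u0 t0 hu => by simp at hu, fun _ => ⟨hev, by rw [hc]; simp⟩⟩
/-! ### Building runs -/

lemma reach_trans {k : ℕ} {A : CEFA σ k} {q q' q'' : A.Q} {w1 w2 : List σ}
    {c1 c2 : Fin k → ℤ} (h1 : CEFA.Reach A q w1 c1 q') (h2 : CEFA.Reach A q' w2 c2 q'') :
    CEFA.Reach A q (w1 ++ w2) (c1 + c2) q'' := by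
  induction h1 with
  | nil => simpa using h2
  | cons hδ hr ih =>
    rw [List.cons_append, add_assoc]
    exact CEFA.Reach.cons hδ (ih h2)

lemma validA : Valid v Ph.A := trivial

lemma validD : Valid v Ph.D := trivial

lemma evalFrom_cons (s : T) (a : σ) (w : List σ) :
    M.evalFrom s (a :: w) = M.evalFrom (M.step s a) w := rfl

lemma reachD (s : T) (w : List σ) :
    CEFA.Reach (aut v M) (s, ⟨Ph.D, trivial⟩) w 0
      (M.evalFrom s w, ⟨Ph.D, trivial⟩) := by
  induction w generalizing s with
  | nil => exact CEFA.Reach.nil _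
  | cons a w ih =>
    have h := CEFA.Reach.cons
      (mem_delta v M (hp := validD v) (hp' := validD v) (Tr.DD (v := v) s a))
      (ih (M.step s a))
    simp only [add_zero] at h
    rw [evalFrom_cons]
    exact h

lemma reachC : ∀ (m : ℕ) (s : T) (t : ℕ) (u : List σ) (hval : Valid v (Ph.C u t)),
    v.length - t = m →
    okRun v u ((v.drop t).dropLast) →
    CEFA.Reach (aut v M) (s, ⟨Ph.C u t, hval⟩) (v.drop t) 0
      (M.evalFrom s (v.drop t), ⟨Ph.D, trivial⟩) := by
  intro m
  induction m with
  | zero =>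
    intro s t u hval hm hok
    exact absurd hm (by have := hval.2; omega)
  | succ k ih =>
    intro s t u hval hm hok
    have ht : t < v.length := hval.2
    have hdrop : v.drop t = v[t] :: v.drop (t + 1) := List.drop_eq_getElem_cons ht
    by_cases hlast : t + 1 = v.length
    · have hnil : v.drop (t + 1) = [] := by rw [hlast]; exact List.drop_length
      have hd : v.drop t = [v[t]] := by rw [hdrop, hnil]
      have hstep := mem_delta v M (hp := hval) (hp' := validD v)
        (Tr.CD (M := M) s v[t] u t (by simp) hlast)
      have h := CEFA.Reach.cons hstep
        (CEFA.Reach.nil (A := aut v M) (M.step s v[t], ⟨Ph.D, validD v⟩))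
      simp only [add_zero] at h
      rw [hd, evalFrom_cons]
      exact h
    · have htl : t + 1 < v.length := by omega
      have hne : v.drop (t + 1) ≠ [] := by
        apply List.ne_nil_of_length_pos; rw [List.length_drop]; omega
      rw [hdrop, List.dropLast_cons_of_ne_nil hne] at hok
      obtain ⟨h1, h2⟩ := hok
      have hval' : Valid v (Ph.C (push v u v[t]) (t + 1)) := ⟨length_push v u _, htl⟩
      have hstep := mem_delta v M (hp := hval) (hp' := hval')
        (Tr.CC (M := M) s v[t] u t (by simp) htl h1)
      have h := CEFA.Reach.cons hstep
        (ih (M.step s v[t]) (t + 1) (push v u v[t]) hval' (by omega) h2)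
      simp only [add_zero] at h
      rw [hdrop, evalFrom_cons]
      exact h

lemma reachB (hv : v ≠ []) : ∀ (y : List σ) (s : T) (u : List σ)
    (hval : Valid v (Ph.B u)), y ≠ [] →
    okRun v u (y ++ v.dropLast) →
    CEFA.Reach (aut v M) (s, ⟨Ph.B u, hval⟩) (y ++ v) ![0, (y.length : ℤ)]
      (M.evalFrom s (y ++ v), ⟨Ph.D, trivial⟩) := by
  intro y
  induction y with
  | nil => intro s u hval hy hok; exact absurd rfl hy
  | cons a y ih =>
    intro s u hval _ hok
    obtain ⟨h1, h2⟩ := hok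
    by_cases hy : y = []
    · subst hy
      have hval' : Valid v (Ph.C (push v u a) 0) := ⟨length_push v u a, List.length_pos_iff.mpr hv⟩
      have hstep := mem_delta v M (hp := hval) (hp' := hval') (Tr.BC (M := M) s a u h1)
      have hrest := reachC v M v.length (M.step s a) 0 (push v u a) hval' (by omega)
        (by simpa using h2)
      have h := CEFA.Reach.cons hstep hrest
      have hc : (![0, 1] + 0 : Fin 2 → ℤ) = ![0, (([a] : List σ).length : ℤ)] := by
        funext i; fin_cases i <;> simp
      rw [show ([a] : List σ) ++ v = a :: v.drop 0 from by simp]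
      rw [← hc, evalFrom_cons]
      exact h
    · have hval' : Valid v (Ph.B (push v u a)) := length_push v u a
      have hstep := mem_delta v M (hp := hval) (hp' := hval') (Tr.BB (M := M) s a u h1)
      have h := CEFA.Reach.cons hstep (ih (M.step s a) (push v u a) hval' hy h2)
      have hc : (![0, 1] + ![0, (y.length : ℤ)] : Fin 2 → ℤ)
          = ![0, ((a :: y : List σ).length : ℤ)] := by
        funext i; fin_cases i <;> simp <;> push_cast <;> ring
      rw [show (a :: y : List σ) ++ v = a :: (y ++ v) from by simp, ← hc, evalFrom_cons]
      exact h

lemma reachA (hv : v ≠ []) : ∀ (x : List σ) (y : List σ) (s : T), x ≠ [] →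
    okRun v [] (y ++ v.dropLast) →
    CEFA.Reach (aut v M) (s, ⟨Ph.A, trivial⟩) (x ++ y ++ v)
      ![(x.length : ℤ), (x.length : ℤ) + (y.length : ℤ)]
      (M.evalFrom s (x ++ y ++ v), ⟨Ph.D, trivial⟩) := by
  intro x
  induction x with
  | nil => intro y s hx hok; exact absurd rfl hx
  | cons a x ih =>
    intro y s _ hok
    by_cases hx : x = []
    · subst hx
      by_cases hy : y = []
      · subst hy
        have hval' : Valid v (Ph.C [] 0) := ⟨by simp, List.length_pos_iff.mpr hv⟩
        have hstep := mem_delta v M (hp := validA v) (hp' := hval') (Tr.AC (M := M) s a)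
        have hrest := reachC v M v.length (M.step s a) 0 [] hval' (by omega)
          (by simpa using hok)
        have h := CEFA.Reach.cons hstep hrest
        have hc : (![1, 1] + 0 : Fin 2 → ℤ)
            = ![(([a] : List σ).length : ℤ), (([a] : List σ).length : ℤ) + (([] : List σ).length : ℤ)] := by
          funext i; fin_cases i <;> simp
        rw [show ([a] : List σ) ++ [] ++ v = a :: v.drop 0 from by simp]
        rw [← hc, evalFrom_cons]
        exact h
      · have hval' : Valid v (Ph.B []) := by simp [Valid]
        have hstep := mem_delta v M (hp := validA v) (hp' := hval') (Tr.AB (M := M) s a)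
        have h := CEFA.Reach.cons hstep (reachB v M hv y (M.step s a) [] hval' hy hok)
        have hc : (![1, 1] + ![0, (y.length : ℤ)] : Fin 2 → ℤ)
            = ![(([a] : List σ).length : ℤ), (([a] : List σ).length : ℤ) + (y.length : ℤ)] := by
          funext i; fin_cases i <;> simp
        rw [show ([a] : List σ) ++ y ++ v = a :: (y ++ v) from by simp]
        rw [← hc, evalFrom_cons]
        exact h
    · have hstep := mem_delta v M (hp := validA v) (hp' := validA v) (Tr.AA (M := M) s a)
      have h := CEFA.Reach.cons hstep (ih y (M.step s a) hx hok)
      have hc : (![1, 1] + (![(x.length : ℤ), (x.length : ℤ) + (y.length : ℤ)]) : Fin 2 → ℤ)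
          = ![((a :: x : List σ).length : ℤ), ((a :: x : List σ).length : ℤ) + (y.length : ℤ)] := by
        funext i; fin_cases i <;> simp <;> push_cast <;> ring
      rw [show (a :: x : List σ) ++ y ++ v = a :: (x ++ y ++ v) from by simp]
      rw [← hc, evalFrom_cons]
      exact h

/-! ### Finiteness -/

lemma valid_finite [Finite σ] : {p : Ph σ | Valid v p}.Finite := by
  have h1 : {l : List σ | l.length ≤ v.length - 1}.Finite := List.finite_length_le σ _
  have h2 : {t : ℕ | t < v.length}.Finite := Set.finite_Iio v.length
  apply Set.Finite.subset (s :=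
    ({Ph.A, Ph.D} : Set (Ph σ)) ∪ (Ph.B '' {l : List σ | l.length ≤ v.length - 1}) ∪
      Set.image2 Ph.C {l : List σ | l.length ≤ v.length - 1} {t : ℕ | t < v.length})
  · exact (((Set.finite_singleton _).insert _).union (h1.image _)).union
      (Set.Finite.image2 _ h1 h2)
  · intro p hp
    cases p with
    | A => simp
    | B u => simp only [Set.mem_setOf_eq, Valid] at hp; simp [hp]
    | C u t => obtain ⟨hp1, hp2⟩ := hp; simp only [Set.mem_union]
               exact Or.inr (Set.mem_image2_of_mem hp1 hp2)
    | D => simp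

lemma aut_finite [Finite σ] [Finite T] : (aut v M).IsFinite := by
  haveI : Finite {p : Ph σ // Valid v p} := (valid_finite v).to_subtype
  haveI hQ : Finite ((aut v M).Q) :=
    (show Finite (T × {p : Ph σ // Valid v p}) from inferInstance)
  refine ⟨hQ, ?_⟩
  have hsub : (aut v M).δ ⊆ Set.univ ×ˢ Set.univ ×ˢ Set.univ ×ˢ
      ({![1, 1], ![0, 1], 0} : Set (Fin 2 → ℤ)) := by
    rintro ⟨⟨s, p, hp⟩, a, ⟨s', p', hp'⟩, η⟩ h
    have h' : Tr v M (s, p) a (s', p') η := h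
    cases h' <;> simp <;> exact ⟨Set.mem_univ _, Set.mem_univ _⟩
  exact Set.Finite.subset
    (Set.finite_univ.prod (Set.finite_univ.prod (Set.finite_univ.prod
      (Set.toFinite _)))) hsub
end IndexOfCERL

theorem indexof_graph_isCERL {σ : Type} [Fintype σ] (L : Language σ) (hL : L.IsRegular)
    (v : List σ) (hv : v ≠ []) :
    IsCERL {p : List σ × (Fin 2 → ℤ) | p.1 ∈ L ∧ ∃ i j : ℕ,
      p.2 = ![(i : ℤ), (j : ℤ)] ∧ i ≤ j ∧ OccursAt v p.1 j ∧
      ∀ q : ℕ, i ≤ q → q < j → ¬ OccursAt v p.1 q} := by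
  classical
  obtain ⟨T, fT, M, hM⟩ := hL
  haveI := fT
  open IndexOfCERL in
  refine ⟨aut v M, aut_finite v M, ?_⟩
  ext ⟨w, c⟩
  simp only [CEFA.Lang, Set.mem_setOf_eq]
  constructor
  · rintro ⟨⟨s0, p0, hp0⟩, qf, ⟨hstart, hph⟩, hF, hr⟩
    have hstart' : s0 = M.start := hstart
    subst hstart'
    have hs := IndexOfCERL.sound v M hr hF
    rcases hph with h0 | h0 | h0
    · obtain ⟨x, y, w', hx, hw, hc, hok, hev⟩ := hs.1 h0
      subst hw
      refine ⟨by rw [← hM]; exact (DFA.mem_accepts M).mpr hev,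
        x.length, x.length + y.length, ?_, by omega, IndexOfCERL.occ_at_middle v x y w', ?_⟩
      · rw [hc]; push_cast; rfl
      · exact fun q hq1 hq2 => (IndexOfCERL.okRun_iff_noocc hv x y w').mp hok q hq1 hq2
    · obtain ⟨y, w', hy, hw, hc, hok, hev⟩ := hs.2.1 [] h0
      subst hw
      refine ⟨by rw [← hM]; exact (DFA.mem_accepts M).mpr hev, 0, y.length, ?_, by omega, ?_, ?_⟩
      · rw [hc]; push_cast; rfl
      · simpa using IndexOfCERL.occ_at_middle v [] y w'
      · intro q hq1 hq2
        have := (IndexOfCERL.okRun_iff_noocc hv [] y w').mp hok q (by simp) (by simpa using hq2)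
        simpa using this
    · obtain ⟨w', hw, hc, hok, hev⟩ := hs.2.2.1 [] 0 h0
      rw [List.drop_zero] at hw
      subst hw
      refine ⟨by rw [← hM]; exact (DFA.mem_accepts M).mpr hev, 0, 0, ?_, le_refl 0, ?_, ?_⟩
      · rw [hc]; funext k; fin_cases k <;> simp
      · simpa using IndexOfCERL.occ_at_middle v [] [] w'
      · intro q hq1 hq2; omega
  · rintro ⟨hwL, i, j, hc, hij, ⟨hocc1, hocc2⟩, hno⟩
    have hv1 : 1 ≤ v.length := List.length_pos_iff.mpr hv
    obtain ⟨hdec, hxl, hyl⟩ := IndexOfCERL.decomp (v := v) hij hocc1 hocc2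
    set x := w.take i with hxdef
    set y := (w.drop i).take (j - i) with hydef
    set w' := w.drop (j + v.length) with hwdef'
    have hok : okRun v [] (y ++ v.dropLast) := by
      rw [IndexOfCERL.okRun_iff_noocc hv x y w']
      intro q hq1 hq2
      rw [← hdec]
      exact hno q (by omega) (by omega)
    have hwacc : M.evalFrom M.start w ∈ M.accept :=
      (DFA.mem_accepts M).mp (by rw [hM]; exact hwL)
    by_cases hi : i = 0
    · have hx0 : x = [] := List.eq_nil_of_length_eq_zero (by omega)
      by_cases hjj : j = 0
      · have hy0 : y = [] := List.eq_nil_of_length_eq_zero (by omega)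
        have hval : Valid v (Ph.C [] 0) := ⟨by simp, hv1⟩
        have h1 := IndexOfCERL.reachC v M v.length M.start 0 [] hval (by omega)
          (by simpa using (hy0 ▸ hok : okRun v [] ([] ++ v.dropLast)))
        have h2 := IndexOfCERL.reach_trans h1
          (IndexOfCERL.reachD v M (M.evalFrom M.start (v.drop 0)) w')
        rw [← DFA.evalFrom_of_append] at h2
        have hww : v.drop 0 ++ w' = w := by
          rw [hdec, hx0, hy0]; simp
        rw [hww] at h2
        simp only [add_zero] at h2
        refine ⟨(M.start, ⟨Ph.C [] 0, hval⟩), (M.evalFrom M.start w, ⟨Ph.D, IndexOfCERL.validD v⟩),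
          ⟨rfl, Or.inr (Or.inr rfl)⟩, ⟨hwacc, rfl⟩, ?_⟩
        have hc0 : c = (0 : Fin 2 → ℤ) := by
          rw [hc]; subst hi hjj; funext k; fin_cases k <;> simp
        rw [hc0]
        exact h2
      · have hy : y ≠ [] := by
          intro h
          exact hjj (by rw [h] at hyl; simp at hyl; omega)
        have hval : Valid v (Ph.B []) := by simp [Valid]
        have h1 := IndexOfCERL.reachB v M hv y M.start [] hval hy hok
        have h2 := IndexOfCERL.reach_trans h1
          (IndexOfCERL.reachD v M (M.evalFrom M.start (y ++ v)) w')
        rw [← DFA.evalFrom_of_append] at h2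
        have hww : (y ++ v) ++ w' = w := by
          rw [hdec, hx0]; simp
        rw [hww] at h2
        refine ⟨(M.start, ⟨Ph.B [], hval⟩),
          (M.evalFrom M.start w, ⟨Ph.D, IndexOfCERL.validD v⟩),
          ⟨rfl, Or.inr (Or.inl rfl)⟩, ⟨hwacc, rfl⟩, ?_⟩
        have hc0 : c = ![0, (y.length : ℤ)] + 0 := by
          rw [hc]; funext k; fin_cases k <;> simp <;> omega
        rw [hc0]
        exact h2
    · have hx : x ≠ [] := by
        intro h
        exact hi (by rw [h] at hxl; simpa using hxl.symm)
      have h1 := IndexOfCERL.reachA v M hv x y M.start hx hok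
      have h2 := IndexOfCERL.reach_trans h1
        (IndexOfCERL.reachD v M (M.evalFrom M.start (x ++ y ++ v)) w')
      rw [← DFA.evalFrom_of_append] at h2
      have hww : (x ++ y ++ v) ++ w' = w := by
        rw [hdec]
      rw [hww] at h2
      refine ⟨(M.start, ⟨Ph.A, IndexOfCERL.validA v⟩),
        (M.evalFrom M.start w, ⟨Ph.D, IndexOfCERL.validD v⟩),
        ⟨rfl, Or.inl rfl⟩, ⟨hwacc, rfl⟩, ?_⟩
      have hc0 : c = ![(x.length : ℤ), (x.length : ℤ) + (y.length : ℤ)] + 0 := by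
        rw [hc]; funext k; fin_cases k <;> simp <;> omega
      rw [hc0]
      exact h2
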